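/- Let T = (T*, T△) be a spherical latin bitrade with equation matrix B. If either 1 ≤ i ≤ o1 < j ≤ m or o1 < i ≤ o1 + o2 < j ≤ m, then |det B_{ij}| = |det B_{1m}|. -/

import Mathlib

open Function Set

namespace Stmt12Aux

variable {n : ℕ}

/-- The Cramer-type vector of signed maximal minors is in the kernel of an `n × (n+1)` matrix. -/
lemma cramer_kernel (A : Matrix (Fin n) (Fin (n + 1)) ℚ) :
    A.mulVec (fun p => (-1) ^ (p : ℕ) * (A.submatrix id p.succAbove).det) = 0 := by
  funext r
  have hdup : (Matrix.of (Fin.cons (A r) A) : Matrix (Fin (n + 1)) (Fin (n + 1)) ℚ).det = 0 := by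
    refine Matrix.det_zero_of_row_eq (i := 0) (j := r.succ) (Fin.succ_ne_zero r).symm ?_
    ext b; simp; rfl
  rw [Matrix.det_succ_row_zero] at hdup
  have hsub : ∀ j : Fin (n+1),
      ((Matrix.of (Fin.cons (A r) A) : Matrix (Fin (n+1)) (Fin (n+1)) ℚ).submatrix
        Fin.succ j.succAbove) = A.submatrix id j.succAbove := by
    intro j; ext a b; simp; rfl
  simp only [hsub, Matrix.of_apply, Fin.cons_zero] at hdup
  rw [Matrix.mulVec, Pi.zero_apply, ← hdup]
  refine Finset.sum_congr rfl fun j _ => ?_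
  simp [dotProduct]; change _ = _ * A r j * _; ring

/-- Any kernel vector is proportional to the Cramer vector. -/
lemma kernel_prop (A : Matrix (Fin n) (Fin (n + 1)) ℚ) (v : Fin (n + 1) → ℚ)
    (hv : A.mulVec v = 0) (a b : Fin (n + 1)) :
    v a * ((-1) ^ (b : ℕ) * (A.submatrix id b.succAbove).det)
      = v b * ((-1) ^ (a : ℕ) * (A.submatrix id a.succAbove).det) := by
  set w : Fin (n + 1) → ℚ := fun p => (-1) ^ (p : ℕ) * (A.submatrix id p.succAbove).det with hw
  by_cases hw0 : w = 0
  · have ha := congr_fun hw0 a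
    have hb := congr_fun hw0 b
    simp only [hw, Pi.zero_apply] at ha hb
    rw [ha, hb, mul_zero, mul_zero]
  · obtain ⟨c, hc⟩ := Function.ne_iff.mp hw0
    have hdet : (A.submatrix id c.succAbove).det ≠ 0 := by
      intro h; apply hc; simp [hw, h]
    have hzero : ∀ u : Fin (n + 1) → ℚ, A.mulVec u = 0 → u c = 0 → u = 0 := by
      intro u hu huc
      have hsq : (A.submatrix id c.succAbove).mulVec (u ∘ c.succAbove) = 0 := by
        funext r
        have := congr_fun hu r
        rw [Matrix.mulVec, dotProduct, Fin.sum_univ_succAbove _ c, huc, mul_zero,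
          zero_add, Pi.zero_apply] at this
        simpa [Matrix.mulVec, dotProduct] using this
      have hu' : u ∘ c.succAbove = 0 := by
        have h1 : (A.submatrix id c.succAbove)⁻¹ *
            (A.submatrix id c.succAbove) = 1 :=
          Matrix.nonsing_inv_mul _ (isUnit_iff_ne_zero.mpr hdet)
        calc u ∘ c.succAbove
            = ((A.submatrix id c.succAbove)⁻¹ * (A.submatrix id c.succAbove)).mulVec
              (u ∘ c.succAbove) := by rw [h1, Matrix.one_mulVec]
          _ = (A.submatrix id c.succAbove)⁻¹.mulVec
              ((A.submatrix id c.succAbove).mulVec (u ∘ c.succAbove)) := by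
              rw [Matrix.mulVec_mulVec]
          _ = 0 := by rw [hsq, Matrix.mulVec_zero]
      funext p
      rcases eq_or_ne p c with rfl | hp
      · exact huc
      · obtain ⟨k, hk⟩ := Fin.exists_succAbove_eq hp
        rw [← hk]
        exact congr_fun hu' k
    have hwker : A.mulVec w = 0 := cramer_kernel A
    have key : ∀ p, w c * v p = v c * w p := by
      intro p
      have h0 : (w c • v - v c • w) = 0 := by
        apply hzero
        · rw [Matrix.mulVec_sub, Matrix.mulVec_smul, Matrix.mulVec_smul, hv, hwker]
          simp
        · simp [mul_comm]
      have := congr_fun h0 p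
      simp only [Pi.sub_apply, Pi.smul_apply, smul_eq_mul, Pi.zero_apply, sub_eq_zero] at this
      exact this
    have h1 := key a
    have h2 := key b
    have hwc : w c ≠ 0 := hc
    show v a * w b = v b * w a
    apply mul_left_cancel₀ hwc
    calc w c * (v a * w b) = (w c * v a) * w b := by ring
      _ = (v c * w a) * w b := by rw [h1]
      _ = (v c * w b) * w a := by ring
      _ = (w c * v b) * w a := by rw [h2]
      _ = w c * (v b * w a) := by ring

/-- Key step: two minors obtained by deleting a common column `c` (at which some kernel
vector `v` vanishes) and one further column where `|v| = 1` have equal absolute value. -/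
lemma key_step (Bq : Matrix (Fin n) (Fin (n + 2)) ℚ) (v : Fin (n + 2) → ℚ)
    (hv : Bq.mulVec v = 0) (c : Fin (n + 2)) (hvc : v c = 0) (a b : Fin (n + 1))
    (hva : |v (c.succAbove a)| = 1) (hvb : |v (c.succAbove b)| = 1) :
    |(Bq.submatrix id (fun k => c.succAbove (a.succAbove k))).det| =
      |(Bq.submatrix id (fun k => c.succAbove (b.succAbove k))).det| := by
  set A : Matrix (Fin n) (Fin (n + 1)) ℚ := Bq.submatrix id c.succAbove with hA
  have hker : A.mulVec (v ∘ c.succAbove) = 0 := by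
    funext r
    have := congr_fun hv r
    rw [Matrix.mulVec, dotProduct, Fin.sum_univ_succAbove _ c, hvc, mul_zero,
      zero_add, Pi.zero_apply] at this
    simpa [hA, Matrix.mulVec, dotProduct] using this
  have hprop := kernel_prop A (v ∘ c.succAbove) hker a b
  have hsub : ∀ p : Fin (n + 1),
      A.submatrix id p.succAbove = Bq.submatrix id (fun k => c.succAbove (p.succAbove k)) := by
    intro p; ext x y; simp [hA]
  have habs := congrArg abs hprop
  rw [abs_mul, abs_mul, abs_mul, abs_mul, Function.comp_apply, Function.comp_apply,
    hva, hvb, abs_pow, abs_neg, abs_one, one_pow, abs_pow, abs_neg, abs_one, one_pow,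
    one_mul, one_mul, one_mul, one_mul, hsub a, hsub b] at habs
  exact habs.symm

lemma range_double_succAbove (c : Fin (n + 2)) (p : Fin (n + 1)) :
    Set.range (fun k : Fin n => c.succAbove (p.succAbove k)) = {c, c.succAbove p}ᶜ := by
  ext x
  simp only [Set.mem_range, Set.mem_compl_iff, Set.mem_insert_iff, Set.mem_singleton_iff,
    not_or]
  constructor
  · rintro ⟨k, rfl⟩
    exact ⟨Fin.succAbove_ne c _, fun h => (Fin.succAbove_ne p k) (c.succAbove_right_injective h)⟩
  · rintro ⟨h1, h2⟩
    obtain ⟨y, hy⟩ := Fin.exists_succAbove_eq h1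
    have hyp : y ≠ p := fun h => h2 (by rw [← hy, h])
    obtain ⟨k, hk⟩ := Fin.exists_succAbove_eq hyp
    exact ⟨k, by rw [hk, hy]⟩

/-- Two doubly-punched monotone embeddings with the same omitted pair are equal. -/
lemma emb_eq (c d : Fin (n + 2)) (p q : Fin (n + 1))
    (h : ({c, c.succAbove p} : Set (Fin (n + 2))) = {d, d.succAbove q}) :
    (fun k : Fin n => c.succAbove (p.succAbove k)) =
      (fun k : Fin n => d.succAbove (q.succAbove k)) := by
  have h1 : StrictMono (fun k : Fin n => c.succAbove (p.succAbove k)) :=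
    (Fin.strictMono_succAbove c).comp (Fin.strictMono_succAbove p)
  have h2 : StrictMono (fun k : Fin n => d.succAbove (q.succAbove k)) :=
    (Fin.strictMono_succAbove d).comp (Fin.strictMono_succAbove q)
  haveI : WellFoundedLT (Fin n) := inferInstance
  refine ((StrictMono.range_inj (β := Fin n) (γ := Fin (n+2)) h1 h2)).mp ?_
  rw [range_double_succAbove, range_double_succAbove, h]

end Stmt12Aux

variable {R C S : Type*} [DecidableEq R] [DecidableEq C] [DecidableEq S]

/-- Conditions (R1)-(R3) of a latin bitrade: `star` and `tri` are disjoint, and for every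
triple in one set and every pair of coordinates there is exactly one triple of the other
set agreeing in those two coordinates. -/
structure IsLatinBitrade (star tri : Finset (R × C × S)) : Prop where
  disj : Disjoint star tri
  r2a : ∀ p ∈ star, ∃! q, q ∈ tri ∧ q.1 = p.1 ∧ q.2.1 = p.2.1
  r2b : ∀ p ∈ star, ∃! q, q ∈ tri ∧ q.1 = p.1 ∧ q.2.2 = p.2.2
  r2c : ∀ p ∈ star, ∃! q, q ∈ tri ∧ q.2.1 = p.2.1 ∧ q.2.2 = p.2.2
  r3a : ∀ q ∈ tri, ∃! p, p ∈ star ∧ p.1 = q.1 ∧ p.2.1 = q.2.1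
  r3b : ∀ q ∈ tri, ∃! p, p ∈ star ∧ p.1 = q.1 ∧ p.2.2 = q.2.2
  r3c : ∀ q ∈ tri, ∃! p, p ∈ star ∧ p.2.1 = q.2.1 ∧ p.2.2 = q.2.2

/-- A latin bitrade is indecomposable if it is not the disjoint union of two
nonempty latin bitrades. -/
def BitradeIndecomposable (star tri : Finset (R × C × S)) : Prop :=
  ¬ ∃ s₁ t₁ s₂ t₂ : Finset (R × C × S),
      s₁.Nonempty ∧ s₂.Nonempty ∧ Disjoint s₁ s₂ ∧ Disjoint t₁ t₂ ∧
      s₁ ∪ s₂ = star ∧ t₁ ∪ t₂ = tri ∧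
      IsLatinBitrade s₁ t₁ ∧ IsLatinBitrade s₂ t₂

/-- An indecomposable latin bitrade is spherical if `m = s + 2`, where `m` is the total
number of occurring rows, columns and symbols and `s` is the size. -/
def IsSphericalBitrade (star tri : Finset (R × C × S)) : Prop :=
  IsLatinBitrade star tri ∧ BitradeIndecomposable star tri ∧
    (star.image Prod.fst).card + (star.image fun p => p.2.1).card +
      (star.image fun p => p.2.2).card = star.card + 2

/-- **Lemma 4.1 (Lemma 41).** Deleting from the equation matrix `B` of a spherical latin
bitrade a row-column and any later column, or a column-column and a symbol-column, yields
a square matrix whose determinant has the same absolute value as `det B_{1m}`.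

Here `s = |T*|`, `m = s + 2`, `eqn` enumerates the equations (rows of `B`), `var`
labels the variables `x₁,…,x_m` so that rows come first, then columns, then symbols
(`o1`, `o2`, `o3` many of each), and `hB` says that `B` is the matrix of `Eq(T)`. -/
theorem stmt12 [Fintype R] [Fintype C] [Fintype S]
    (star tri : Finset (R × C × S)) (hsph : IsSphericalBitrade star tri)
    (hcovR : ∀ r : R, ∃ p ∈ star, p.1 = r)
    (hcovC : ∀ c : C, ∃ p ∈ star, p.2.1 = c)
    (hcovS : ∀ s : S, ∃ p ∈ star, p.2.2 = s)
    (s o1 o2 o3 : ℕ) (hs : star.card = s)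
    (ho1 : Fintype.card R = o1) (ho2 : Fintype.card C = o2) (ho3 : Fintype.card S = o3)
    (eqn : Fin s ≃ {p : R × C × S // p ∈ star})
    (var : (R ⊕ C ⊕ S) ≃ Fin (s + 2))
    (hvarR : ∀ r : R, ((var (Sum.inl r)) : ℕ) < o1)
    (hvarC : ∀ c : C, o1 ≤ ((var (Sum.inr (Sum.inl c))) : ℕ) ∧
      ((var (Sum.inr (Sum.inl c))) : ℕ) < o1 + o2)
    (hvarS : ∀ y : S, o1 + o2 ≤ ((var (Sum.inr (Sum.inr y))) : ℕ))
    (B : Matrix (Fin s) (Fin (s + 2)) ℤ)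
    (hB : ∀ (k : Fin s) (j : Fin (s + 2)),
      B k j = (if j = var (Sum.inl (eqn k).1.1) then 1 else 0)
            + (if j = var (Sum.inr (Sum.inl (eqn k).1.2.1)) then 1 else 0)
            - (if j = var (Sum.inr (Sum.inr (eqn k).1.2.2)) then 1 else 0)) :
    ∀ (i j : Fin (s + 2)) (hij : (i : ℕ) < (j : ℕ)),
      (((i : ℕ) < o1 ∧ o1 ≤ (j : ℕ)) ∨
        (o1 ≤ (i : ℕ) ∧ (i : ℕ) < o1 + o2 ∧ o1 + o2 ≤ (j : ℕ))) →
      |(B.submatrix id (fun k : Fin s => j.succAbove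
          ((⟨(i : ℕ), Nat.lt_of_lt_of_le hij (Nat.lt_succ_iff.mp j.isLt)⟩ :
            Fin (s + 1)).succAbove k))).det| =
      |(B.submatrix id (fun k : Fin s => (Fin.last (s + 1)).succAbove
          ((0 : Fin (s + 1)).succAbove k))).det| := by
  intro i j hij hcase
  rcases Nat.eq_zero_or_pos s with hs0 | hs0
  · subst hs0
    simp [Matrix.det_isEmpty]
  -- nonempty case
  have hstar : star.Nonempty := Finset.card_pos.mp (by omega)
  obtain ⟨p0, hp0⟩ := hstar
  haveI : Nonempty R := ⟨p0.1⟩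
  haveI : Nonempty C := ⟨p0.2.1⟩
  haveI : Nonempty S := ⟨p0.2.2⟩
  have ho1pos : 0 < o1 := ho1 ▸ Fintype.card_pos
  have ho3pos : 0 < o3 := ho3 ▸ Fintype.card_pos
  -- counting: o1 + o2 + o3 = s + 2
  have himgR : star.image Prod.fst = Finset.univ :=
    Finset.eq_univ_iff_forall.mpr fun r => by
      obtain ⟨p, hp, he⟩ := hcovR r; exact Finset.mem_image.mpr ⟨p, hp, he⟩
  have himgC : (star.image fun p => p.2.1) = Finset.univ :=
    Finset.eq_univ_iff_forall.mpr fun c => by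
      obtain ⟨p, hp, he⟩ := hcovC c; exact Finset.mem_image.mpr ⟨p, hp, he⟩
  have himgS : (star.image fun p => p.2.2) = Finset.univ :=
    Finset.eq_univ_iff_forall.mpr fun y => by
      obtain ⟨p, hp, he⟩ := hcovS y; exact Finset.mem_image.mpr ⟨p, hp, he⟩
  have hsum : o1 + o2 + o3 = s + 2 := by
    have := hsph.2.2
    rw [himgR, himgC, himgS, Finset.card_univ, Finset.card_univ, Finset.card_univ,
      ho1, ho2, ho3, hs] at this
    exact this
  have hlast : o1 + o2 ≤ s + 1 := by omega
  -- region lemmas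
  have hsymR : ∀ x : Fin (s + 2), (x : ℕ) < o1 → ∃ r, var.symm x = Sum.inl r := by
    intro x hx
    rcases h : var.symm x with r | c | y
    · exact ⟨r, rfl⟩
    · exfalso
      have hx' : var (Sum.inr (Sum.inl c)) = x := by rw [← h, Equiv.apply_symm_apply]
      have := (hvarC c).1
      rw [hx'] at this; omega
    · exfalso
      have hx' : var (Sum.inr (Sum.inr y)) = x := by rw [← h, Equiv.apply_symm_apply]
      have := hvarS y
      rw [hx'] at this; omega
  have hsymC : ∀ x : Fin (s + 2), o1 ≤ (x : ℕ) → (x : ℕ) < o1 + o2 →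
      ∃ c, var.symm x = Sum.inr (Sum.inl c) := by
    intro x hx1 hx2
    rcases h : var.symm x with r | c | y
    · exfalso
      have hx' : var (Sum.inl r) = x := by rw [← h, Equiv.apply_symm_apply]
      have := hvarR r
      rw [hx'] at this; omega
    · exact ⟨c, rfl⟩
    · exfalso
      have hx' : var (Sum.inr (Sum.inr y)) = x := by rw [← h, Equiv.apply_symm_apply]
      have := hvarS y
      rw [hx'] at this; omega
  have hsymS : ∀ x : Fin (s + 2), o1 + o2 ≤ (x : ℕ) →
      ∃ y, var.symm x = Sum.inr (Sum.inr y) := by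
    intro x hx
    rcases h : var.symm x with r | c | y
    · exfalso
      have hx' : var (Sum.inl r) = x := by rw [← h, Equiv.apply_symm_apply]
      have := hvarR r
      rw [hx'] at this; omega
    · exfalso
      have hx' : var (Sum.inr (Sum.inl c)) = x := by rw [← h, Equiv.apply_symm_apply]
      have := (hvarC c).2
      rw [hx'] at this; omega
    · exact ⟨y, rfl⟩
  -- the rational matrix
  set Bq : Matrix (Fin s) (Fin (s + 2)) ℚ := B.map (fun x : ℤ => (x : ℚ)) with hBqdef
  have hBq : ∀ (k : Fin s) (x : Fin (s + 2)),
      Bq k x = (if x = var (Sum.inl (eqn k).1.1) then 1 else 0)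
            + (if x = var (Sum.inr (Sum.inl (eqn k).1.2.1)) then 1 else 0)
            - (if x = var (Sum.inr (Sum.inr (eqn k).1.2.2)) then 1 else 0) := by
    intro k x
    have : Bq k x = ((B k x : ℤ) : ℚ) := rfl
    rw [this, hB]
    push_cast [apply_ite (fun z : ℤ => (z : ℚ))]
    ring
  -- kernel vectors
  set V : ℚ → ℚ → ℚ → (Fin (s + 2) → ℚ) := fun gR gC gS x =>
    Sum.elim (fun _ => gR) (Sum.elim (fun _ => gC) (fun _ => gS)) (var.symm x) with hVdef
  have hVval : ∀ gR gC gS (z : R ⊕ C ⊕ S), V gR gC gS (var z) =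
      Sum.elim (fun _ => gR) (Sum.elim (fun _ => gC) (fun _ => gS)) z := by
    intro gR gC gS z; simp [hVdef]
  have hkV : ∀ gR gC gS : ℚ, gR + gC - gS = 0 → Bq.mulVec (V gR gC gS) = 0 := by
    intro gR gC gS hg
    funext k
    rw [Matrix.mulVec, dotProduct, Pi.zero_apply]
    simp only [hBq, add_mul, sub_mul, ite_mul, one_mul, zero_mul]
    rw [Finset.sum_sub_distrib, Finset.sum_add_distrib]
    simp only [Finset.sum_ite_eq', Finset.mem_univ, if_true]
    rw [hVval, hVval, hVval]
    simpa using hg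
  -- index bookkeeping
  set iF : Fin (s + 1) :=
    (⟨(i : ℕ), Nat.lt_of_lt_of_le hij (Nat.lt_succ_iff.mp j.isLt)⟩ : Fin (s + 1)) with hiFdef
  have hio12 : (i : ℕ) < o1 + o2 := by rcases hcase with ⟨h1, h2⟩ | ⟨h1, h2, h3⟩ <;> omega
  have hjo1 : o1 ≤ (j : ℕ) := by rcases hcase with ⟨h1, h2⟩ | ⟨h1, h2, h3⟩ <;> omega
  have hji : j.succAbove iF = i := by
    have hlt : iF.castSucc < j := by
      rw [Fin.lt_def]; simpa [hiFdef] using hij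
    rw [Fin.succAbove_of_castSucc_lt _ _ hlt]
    exact Fin.ext (by simp [hiFdef])
  have hj0 : j.succAbove (0 : Fin (s + 1)) = 0 := by
    have hlt : (0 : Fin (s + 1)).castSucc < j := by
      rw [Fin.lt_def, Fin.val_castSucc, Fin.val_zero]; omega
    rw [Fin.succAbove_of_castSucc_lt _ _ hlt]
    exact Fin.ext (by simp)
  set jp : Fin (s + 1) := ⟨(j : ℕ) - 1, by omega⟩ with hjpdef
  have h0jp : (0 : Fin (s + 2)).succAbove jp = j := by
    rw [Fin.succAbove_zero]
    exact Fin.ext (by simp [hjpdef]; omega)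
  have h0last : (0 : Fin (s + 2)).succAbove (Fin.last s) = Fin.last (s + 1) := by
    rw [Fin.succAbove_zero]
    exact Fin.succ_last s
  have hlast0 : (Fin.last (s + 1)).succAbove (0 : Fin (s + 1)) = 0 := by
    have hlt : (0 : Fin (s + 1)).castSucc < Fin.last (s + 1) := by
      rw [Fin.lt_def]; simp
    rw [Fin.succAbove_of_castSucc_lt _ _ hlt]
    exact Fin.ext (by simp)
  -- step 1 : move the smaller deleted column to 0
  have step1 : |(Bq.submatrix id (fun k => j.succAbove (iF.succAbove k))).det| =
      |(Bq.submatrix id (fun k => j.succAbove ((0 : Fin (s + 1)).succAbove k))).det| := by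
    by_cases hjS : o1 + o2 ≤ (j : ℕ)
    · refine Stmt12Aux.key_step Bq (V 1 (-1) 0) (hkV 1 (-1) 0 (by ring)) j ?_ iF 0 ?_ ?_
      · obtain ⟨y, hy⟩ := hsymS j hjS
        simp [hVdef, hy]
      · rw [hji]
        rcases Nat.lt_or_ge (i : ℕ) o1 with h | h
        · obtain ⟨r, hr⟩ := hsymR i h; simp [hVdef, hr]
        · obtain ⟨c, hc⟩ := hsymC i h hio12; simp [hVdef, hc]
      · rw [hj0]
        obtain ⟨r, hr⟩ := hsymR 0 (by simp; omega)
        simp [hVdef, hr]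
    · have hiR : (i : ℕ) < o1 := by rcases hcase with ⟨h1, h2⟩ | ⟨h1, h2, h3⟩ <;> omega
      refine Stmt12Aux.key_step Bq (V 1 0 1) (hkV 1 0 1 (by ring)) j ?_ iF 0 ?_ ?_
      · obtain ⟨c, hc⟩ := hsymC j hjo1 (by omega)
        simp [hVdef, hc]
      · rw [hji]
        obtain ⟨r, hr⟩ := hsymR i hiR; simp [hVdef, hr]
      · rw [hj0]
        obtain ⟨r, hr⟩ := hsymR 0 (by simp; omega)
        simp [hVdef, hr]
  -- step 2 : move the larger deleted column to the last one
  have step2 : |(Bq.submatrix id (fun k => (0 : Fin (s + 2)).succAbove (jp.succAbove k))).det| =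
      |(Bq.submatrix id (fun k =>
        (0 : Fin (s + 2)).succAbove ((Fin.last s).succAbove k))).det| := by
    refine Stmt12Aux.key_step Bq (V 0 1 1) (hkV 0 1 1 (by ring)) 0 ?_ jp (Fin.last s) ?_ ?_
    · obtain ⟨r, hr⟩ := hsymR 0 (by simp; omega)
      simp [hVdef, hr]
    · rw [h0jp]
      rcases Nat.lt_or_ge (j : ℕ) (o1 + o2) with h | h
      · obtain ⟨c, hc⟩ := hsymC j hjo1 h; simp [hVdef, hc]
      · obtain ⟨y, hy⟩ := hsymS j h; simp [hVdef, hy]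
    · rw [h0last]
      obtain ⟨y, hy⟩ := hsymS (Fin.last (s + 1)) (by simpa using hlast)
      simp [hVdef, hy]
  have e1 : (fun k : Fin s => (0 : Fin (s + 2)).succAbove (jp.succAbove k)) =
      (fun k => j.succAbove ((0 : Fin (s + 1)).succAbove k)) :=
    Stmt12Aux.emb_eq _ _ _ _ (by rw [h0jp, hj0]; exact Set.pair_comm 0 j)
  have e2 : (fun k : Fin s => (0 : Fin (s + 2)).succAbove ((Fin.last s).succAbove k)) =
      (fun k => (Fin.last (s + 1)).succAbove ((0 : Fin (s + 1)).succAbove k)) :=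
    Stmt12Aux.emb_eq _ _ _ _ (by rw [h0last, hlast0]; exact Set.pair_comm 0 (Fin.last (s + 1)))
  rw [e1, e2] at step2
  have hq := step1.trans step2
  -- transfer back to ℤ
  have hcast : ∀ f : Fin s → Fin (s + 2),
      ((|(B.submatrix id f).det| : ℤ) : ℚ) = |(Bq.submatrix id f).det| := by
    intro f
    rw [Int.cast_abs]
    congr 1
    have hmap : Bq.submatrix id f = (B.submatrix id f).map (fun x : ℤ => (x : ℚ)) := by
      ext a b; simp [hBqdef]
    rw [hmap]
    exact RingHom.map_det (Int.castRingHom ℚ) (B.submatrix id f)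
  have hfin : ((|(B.submatrix id (fun k => j.succAbove (iF.succAbove k))).det| : ℤ) : ℚ) =
      ((|(B.submatrix id (fun k => (Fin.last (s + 1)).succAbove
        ((0 : Fin (s + 1)).succAbove k))).det| : ℤ) : ℚ) := by
    rw [hcast, hcast]; exact hq
  exact_mod_cast hfin
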